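/- Let M be a finite monoid satisfying (xy)^ω x (xy)^ω = (xy)^ω for all x,y ∈ M (i.e., M ∈ DA), let γ : A* → M be a morphism, let u, v ∈ A* and a ∈ A with a occurring in v. If γ(u) R γ(uv) then γ(uva) R γ(u), where R denotes Green's R-relation (s R t iff sM = tM). -/

import Mathlib

/-- The unique idempotent power `s^ω` of an element of a finite monoid
(`s^(card M)!` is idempotent). -/
noncomputable def omegaPow {M : Type*} [Monoid M] [Fintype M] (s : M) : M :=
  s ^ (Nat.factorial (Fintype.card M))

/-- `s R t` for Green's relation `R`: `sM = tM`. -/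
def GreenR {M : Type*} [Monoid M] (s t : M) : Prop :=
  Set.range (fun x => s * x) = Set.range (fun x => t * x)

/-- Let `M` be a finite monoid in `DA`, `γ : A* → M` a morphism, `u, v` words and
`a` a letter occurring in `v`.  If `γ(u) R γ(uv)` then `γ(uva) R γ(u)`. -/
private lemma fix_pow {M : Type*} [Monoid M] {x m : M} (h : x * m = x) :
    ∀ n, x * m ^ n = x
  | 0 => by simp
  | n + 1 => by rw [pow_succ, ← mul_assoc, fix_pow h n, h]

private lemma shift_pow {M : Type*} [Monoid M] (a b : M) :
    ∀ n, (a * b) ^ n * a = a * (b * a) ^ n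
  | 0 => by simp
  | n + 1 => by
      rw [pow_succ', mul_assoc, shift_pow a b n, pow_succ', ← mul_assoc, ← mul_assoc,
        mul_assoc a b a]

private lemma idem_pow {M : Type*} [Monoid M] {e : M} (he : e * e = e) :
    ∀ n, e ^ (n + 1) = e
  | 0 => pow_one e
  | n + 1 => by rw [pow_succ, idem_pow he n, he]

lemma omegaPow_idem {M : Type*} [Monoid M] [Fintype M] (s : M) :
    omegaPow s * omegaPow s = omegaPow s := by
  classical
  obtain ⟨i, j, hne, hij⟩ :=
    Fintype.exists_ne_map_eq_of_card_lt
      (fun i : Fin (Fintype.card M + 1) => s ^ (i : ℕ)) (by simp)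
  obtain ⟨m, n, hmn, hle, hpow⟩ :
      ∃ m n : ℕ, m < n ∧ n ≤ Fintype.card M ∧ s ^ m = s ^ n := by
    rcases lt_or_gt_of_ne hne with hlt | hlt
    · exact ⟨i, j, Fin.lt_def.mp hlt, Nat.lt_succ_iff.mp j.isLt, hij⟩
    · exact ⟨j, i, Fin.lt_def.mp hlt, Nat.lt_succ_iff.mp i.isLt, hij.symm⟩
  set d : ℕ := n - m with hd
  have hd0 : 0 < d := Nat.sub_pos_of_lt hmn
  have hstep : ∀ j, m ≤ j → s ^ j = s ^ (j + d) := by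
    intro j hj
    calc s ^ j = s ^ m * s ^ (j - m) := by rw [← pow_add]; congr 1; omega
      _ = s ^ n * s ^ (j - m) := by rw [hpow]
      _ = s ^ (j + d) := by rw [← pow_add]; congr 1; omega
  have hiter : ∀ l j, m ≤ j → s ^ j = s ^ (j + l * d) := by
    intro l
    induction l with
    | zero => intro j hj; simp
    | succ l ih =>
        intro j hj
        calc s ^ j = s ^ (j + l * d) := ih j hj
          _ = s ^ (j + l * d + d) := hstep _ (by omega)
          _ = s ^ (j + (l + 1) * d) := by congr 1; ring
  set K : ℕ := Nat.factorial (Fintype.card M) with hK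
  have hdK : d ∣ K := Nat.dvd_factorial hd0 (by omega)
  have hmK : m ≤ K := le_trans (by omega) (Nat.self_le_factorial _)
  have h2K : s ^ (K + K) = s ^ K := by
    have := hiter (K / d) K hmK
    rw [Nat.div_mul_cancel hdK] at this
    exact this.symm
  show s ^ K * s ^ K = s ^ K
  rw [← pow_add, h2K]

theorem stmt11 {M : Type*} [Monoid M] [Fintype M] {A : Type*}
    (hDA : ∀ x y : M, omegaPow (x * y) * x * omegaPow (x * y) = omegaPow (x * y))
    (γ : FreeMonoid A →* M) (u v : FreeMonoid A) (a : A)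
    (ha : a ∈ FreeMonoid.toList v)
    (h : GreenR (γ u) (γ (u * v))) :
    GreenR (γ (u * v * FreeMonoid.of a)) (γ u) := by
  classical
  -- decompose v around the letter a
  obtain ⟨l₁, l₂, hl⟩ := List.append_of_mem ha
  have hv : v = FreeMonoid.ofList l₁ * (FreeMonoid.of a * FreeMonoid.ofList l₂) := by
    apply FreeMonoid.toList.injective
    simp [FreeMonoid.toList_mul, FreeMonoid.toList_of, FreeMonoid.toList_ofList, hl]
  set s : M := γ u with hs
  set p : M := γ (FreeMonoid.ofList l₁) with hp
  set c : M := γ (FreeMonoid.of a) with hc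
  set q : M := γ (FreeMonoid.ofList l₂) with hq
  have hγv : γ v = p * (c * q) := by rw [hv]; simp [map_mul]; rfl
  -- get z with s * p * c * q * z = s
  obtain ⟨z, hz⟩ : ∃ z, γ (u * v) * z = γ u := by
    have : γ u ∈ Set.range (fun x => γ (u * v) * x) := by
      rw [← h]; exact ⟨1, mul_one _⟩
    obtain ⟨z, hz⟩ := this
    exact ⟨z, hz⟩
  have hz' : s * p * c * q * z = s := by
    rw [map_mul, hγv] at hz
    simpa only [← mul_assoc] using hz
  -- the two DA idempotents
  set g : M := omegaPow (c * q * z * p) with hg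
  have hA : g * c * q * g = g := by
    have := hDA (c * q) (z * p)
    simpa only [← mul_assoc] using this
  have h1 : s * p * (c * q * z * p) = s * p := by
    simp only [← mul_assoc]
    rw [hz']
  have h2 : s * p * g = s * p := by
    rw [hg, omegaPow]
    exact fix_pow h1 _
  have h4 : s * p * c * q * g = s * p :=
    calc s * p * c * q * g = s * p * g * c * q * g := by rw [h2]
      _ = s * p * (g * c * q * g) := by simp only [mul_assoc]
      _ = s * p * g := by rw [hA]
      _ = s * p := h2
  set E : M := g * c * q with hE
  have hE5 : s * p * c * q * E = s * p * c * q :=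
    calc s * p * c * q * E = s * p * c * q * g * c * q := by
          rw [hE]; simp only [mul_assoc]
      _ = s * p * c * q := by rw [h4]
  have hidem : E * E = E := by
    rw [hE]
    simp only [← mul_assoc]
    rw [hA]
  -- shift: g * c * q = c * q * (z*p*c*q)^K, so E is an omegaPow of c * (...)
  have hsh : E = c * q * (z * p * c * q) ^ Nat.factorial (Fintype.card M) := by
    rw [hE, hg, omegaPow]
    have := shift_pow (c * q) (z * p) (Nat.factorial (Fintype.card M))
    simpa only [← mul_assoc] using this
  have hDA2 : E * c * E = E := by
    have h0 := hDA c (q * (z * p * c * q) ^ Nat.factorial (Fintype.card M))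
    have harg : omegaPow (c * (q * (z * p * c * q) ^ Nat.factorial (Fintype.card M))) = E := by
      rw [omegaPow]
      have hbase : c * (q * (z * p * c * q) ^ Nat.factorial (Fintype.card M)) = E := by
        rw [hsh]; simp only [mul_assoc]
      rw [hbase]
      obtain ⟨K', hK'⟩ : ∃ K', Nat.factorial (Fintype.card M) = K' + 1 :=
        ⟨Nat.factorial (Fintype.card M) - 1, by
          have := Nat.factorial_pos (Fintype.card M); omega⟩
      rw [hK', idem_pow hidem]
    rw [harg] at h0
    exact h0
  have key : s * p * c * q * c * E = s * p * c * q :=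
    calc s * p * c * q * c * E = s * p * c * q * E * c * E := by rw [hE5]
      _ = s * p * c * q * (E * c * E) := by simp only [mul_assoc]
      _ = s * p * c * q * E := by rw [hDA2]
      _ = s * p * c * q := hE5
  -- the image of u * v * a
  have hγuva : γ (u * v * FreeMonoid.of a) = s * p * c * q * c := by
    rw [map_mul, map_mul, hγv]
    simp only [← mul_assoc, hs, hc]
  -- conclude
  unfold GreenR
  rw [hγuva]
  ext x
  constructor
  · rintro ⟨y, rfl⟩
    exact ⟨p * (c * (q * (c * y))), by simp only [← mul_assoc]⟩
  · rintro ⟨y, rfl⟩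
    refine ⟨E * (z * y), ?_⟩
    show s * p * c * q * c * (E * (z * y)) = s * y
    calc s * p * c * q * c * (E * (z * y)) = s * p * c * q * c * E * z * y := by
          simp only [mul_assoc]
      _ = s * p * c * q * z * y := by rw [key]
      _ = s * y := by rw [hz']
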